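/- For b > 0 and a positive integer m, the convex polytope P(b) = {(x_0,...,x_{2m}) ∈ ℝ^{2m+1} : Σ_i x_i = b, Σ_i i·x_i = mb, x_i ≥ 0} has vertex set V = {v_{i,j} : 0 ≤ i < m < j ≤ 2m} ∪ {b·e_m}, where v_{i,j} = ((j−m)/(j−i))·b·e_i + ((m−i)/(j−i))·b·e_j and e_ℓ denotes the ℓ-th standard basis vector (indexed from 0). -/

import Mathlib

/-- The polytope `P(b) ⊆ ℝ^{2m+1}` of non-negative vectors with coordinate sum `b`
and weighted sum `m·b`. -/
def Pset (m : ℕ) (b : ℝ) : Set (Fin (2 * m + 1) → ℝ) :=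
  {x : Fin (2 * m + 1) → ℝ | (∀ i, 0 ≤ x i) ∧ (∑ i, x i) = b ∧ (∑ i : Fin (2 * m + 1), (i.1 : ℝ) * x i) = m * b}

/-- `v` is a vertex of the convex set `P`. -/
def IsVertexOf {E : Type*} [AddCommGroup E] [Module ℝ E] (P : Set E) (v : E) : Prop :=
  v ∈ P ∧ ∀ a : ℝ, 0 < a → a < 1 → ∀ x ∈ P, ∀ y ∈ P,
    v = a • x + (1 - a) • y → x = v ∧ y = v

lemma sum_pair_support' {n : ℕ} (x f : Fin n → ℝ) (i j : Fin n) (hij : i ≠ j)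
    (h : ∀ ℓ, ℓ ≠ i → ℓ ≠ j → x ℓ = 0) :
    ∑ ℓ, f ℓ * x ℓ = f i * x i + f j * x j := by
  rw [show f i * x i + f j * x j = ∑ ℓ ∈ ({i, j} : Finset (Fin n)), f ℓ * x ℓ from
    (Finset.sum_pair (f := fun ℓ => f ℓ * x ℓ) hij).symm]
  refine (Finset.sum_subset (Finset.subset_univ _) ?_).symm
  intro ℓ _ hℓ
  simp only [Finset.mem_insert, Finset.mem_singleton] at hℓ
  push_neg at hℓ
  rw [h ℓ hℓ.1 hℓ.2, mul_zero]

lemma sum_single_support' {n : ℕ} (x f : Fin n → ℝ) (i : Fin n)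
    (h : ∀ ℓ, ℓ ≠ i → x ℓ = 0) :
    ∑ ℓ, f ℓ * x ℓ = f i * x i := by
  rw [← Finset.sum_singleton (fun ℓ => f ℓ * x ℓ) i]
  refine (Finset.sum_subset (Finset.subset_univ _) ?_).symm
  intro ℓ _ hℓ
  simp only [Finset.mem_singleton] at hℓ
  rw [h ℓ hℓ, mul_zero]

lemma sum_triple_support' {n : ℕ} (x f : Fin n → ℝ) (p q r : Fin n)
    (hpq : p ≠ q) (hpr : p ≠ r) (hqr : q ≠ r)
    (h : ∀ ℓ, ℓ ≠ p → ℓ ≠ q → ℓ ≠ r → x ℓ = 0) :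
    ∑ ℓ, f ℓ * x ℓ = f p * x p + f q * x q + f r * x r := by
  have key : ({p, q, r} : Finset (Fin n)).sum (fun ℓ => f ℓ * x ℓ)
      = f p * x p + f q * x q + f r * x r := by
    rw [Finset.sum_insert (by simp [hpq, hpr]), Finset.sum_pair hqr]; ring
  rw [← key]
  refine (Finset.sum_subset (Finset.subset_univ _) ?_).symm
  intro ℓ _ hℓ
  simp only [Finset.mem_insert, Finset.mem_singleton] at hℓ
  push_neg at hℓ
  rw [h ℓ hℓ.1 hℓ.2.1 hℓ.2.2, mul_zero]

lemma wij_mem (m : ℕ) (b : ℝ) (hb : 0 < b) (i j : Fin (2 * m + 1))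
    (hi : (i : ℕ) < m) (hj : m < (j : ℕ)) :
    (fun ℓ => (if ℓ = i then ((j : ℝ) - m) / ((j : ℝ) - i) * b else 0) +
      (if ℓ = j then ((m : ℝ) - i) / ((j : ℝ) - i) * b else 0)) ∈ Pset m b := by
  have hij : (i : ℝ) < (j : ℝ) := by exact_mod_cast hi.trans hj
  have him : (i : ℝ) < (m : ℝ) := by exact_mod_cast hi
  have hmj : (m : ℝ) < (j : ℝ) := by exact_mod_cast hj
  have hne : i ≠ j := fun h => by simp [h] at hij
  have hd : (0:ℝ) < (j : ℝ) - (i : ℝ) := by linarith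
  refine ⟨?_, ?_, ?_⟩
  · intro ℓ
    have h1 : (0:ℝ) ≤ ((j : ℝ) - m) / ((j : ℝ) - i) * b :=
      mul_nonneg (div_nonneg (by linarith) (by linarith)) hb.le
    have h2 : (0:ℝ) ≤ ((m : ℝ) - i) / ((j : ℝ) - i) * b :=
      mul_nonneg (div_nonneg (by linarith) (by linarith)) hb.le
    positivity
  · rw [Finset.sum_add_distrib]
    simp only [Finset.sum_ite_eq', Finset.mem_univ, if_true]
    field_simp
    ring
  · simp only [mul_add, mul_ite, mul_zero, Finset.sum_add_distrib,
      Finset.sum_ite_eq', Finset.mem_univ, if_true]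
    field_simp
    ring

lemma em_mem (m : ℕ) (b : ℝ) (hb : 0 < b) :
    (fun ℓ : Fin (2 * m + 1) => if (ℓ : ℕ) = m then b else 0) ∈ Pset m b := by
  have hmlt : m < 2 * m + 1 := by omega
  have hrw : ∀ ℓ : Fin (2 * m + 1), (if (ℓ : ℕ) = m then b else 0)
      = if ℓ = (⟨m, hmlt⟩ : Fin (2 * m + 1)) then b else 0 := by
    intro ℓ; simp [Fin.ext_iff]
  refine ⟨fun ℓ => by dsimp only; split <;> simp [hb.le], ?_, ?_⟩
  · simp only [hrw, Finset.sum_ite_eq', Finset.mem_univ, if_true]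
  · simp only [hrw, mul_ite, mul_zero, Finset.sum_ite_eq', Finset.mem_univ, if_true]

lemma unique_two (m : ℕ) (b : ℝ) (i j : Fin (2 * m + 1))
    (hi : (i : ℕ) < m) (hj : m < (j : ℕ)) (x : Fin (2 * m + 1) → ℝ)
    (hx : x ∈ Pset m b) (hs : ∀ ℓ, ℓ ≠ i → ℓ ≠ j → x ℓ = 0) :
    x = fun ℓ => (if ℓ = i then ((j : ℝ) - m) / ((j : ℝ) - i) * b else 0) +
      (if ℓ = j then ((m : ℝ) - i) / ((j : ℝ) - i) * b else 0) := by
  have hij : (i : ℝ) < (j : ℝ) := by exact_mod_cast hi.trans hj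
  have hne : i ≠ j := fun h => by simp [h] at hij
  have hd : ((j : ℝ) - (i : ℝ)) ≠ 0 := by linarith
  obtain ⟨_, hsum, hwsum⟩ := hx
  have e1 : x i + x j = b := by
    have h := sum_pair_support' x (fun _ => 1) i j hne hs
    simp only [one_mul] at h
    rw [← h]; simpa using hsum
  have e2 : (i : ℝ) * x i + (j : ℝ) * x j = m * b := by
    rw [← sum_pair_support' x (fun ℓ => (ℓ.1 : ℝ)) i j hne hs]; exact hwsum
  have exi : x i = ((j : ℝ) - m) / ((j : ℝ) - i) * b := by
    field_simp; linear_combination (((j:ℝ)) * e1 - e2)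
  have exj : x j = ((m : ℝ) - i) / ((j : ℝ) - i) * b := by
    field_simp; linear_combination (e2 - ((i:ℝ)) * e1)
  funext ℓ
  by_cases h1 : ℓ = i
  · subst h1; simp [hne, exi]
  · by_cases h2 : ℓ = j
    · subst h2; simp [hne.symm, exj]
    · simp [h1, h2, hs ℓ h1 h2]

lemma unique_one' (m : ℕ) (b : ℝ) (i : Fin (2 * m + 1)) (hi : (i : ℕ) = m)
    (x : Fin (2 * m + 1) → ℝ) (hx : x ∈ Pset m b) (hs : ∀ ℓ, ℓ ≠ i → x ℓ = 0) :
    x = fun ℓ : Fin (2 * m + 1) => if (ℓ : ℕ) = m then b else 0 := by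
  obtain ⟨_, hsum, _⟩ := hx
  have e1 : x i = b := by
    have h := sum_single_support' x (fun _ => 1) i hs
    simp only [one_mul] at h
    rw [← h]; simpa using hsum
  funext ℓ
  by_cases h1 : ℓ = i
  · subst h1; simp [hi, e1]
  · have hne : (ℓ : ℕ) ≠ m := fun h => h1 (Fin.ext (by rw [h, hi]))
    simp [hne, hs ℓ h1]

set_option maxHeartbeats 1000000 in
theorem stmt5 (m : ℕ) (hm : 1 ≤ m) (b : ℝ) (hb : 0 < b) :
    {v | IsVertexOf (Pset m b) v} =
      {w | (∃ i j : Fin (2 * m + 1), (i : ℕ) < m ∧ m < (j : ℕ) ∧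
              w = fun ℓ =>
                (if ℓ = i then ((j : ℝ) - m) / ((j : ℝ) - i) * b else 0) +
                (if ℓ = j then ((m : ℝ) - i) / ((j : ℝ) - i) * b else 0)) ∨
            w = fun ℓ : Fin (2 * m + 1) => if (ℓ : ℕ) = m then b else 0} := by
  ext v
  simp only [Set.mem_setOf_eq]
  constructor
  · -- forward: vertex → description
    rintro ⟨⟨hpos, hsum, hwsum⟩, hext⟩
    have hvP : v ∈ Pset m b := ⟨hpos, hsum, hwsum⟩
    set S := Finset.univ.filter (fun ℓ => v ℓ ≠ 0) with hSdef
    have hmemS : ∀ ℓ, ℓ ∈ S ↔ v ℓ ≠ 0 := by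
      intro ℓ; simp [hSdef]
    have hoffS : ∀ ℓ, ℓ ∉ S → v ℓ = 0 := by
      intro ℓ h; by_contra hc; exact h ((hmemS ℓ).mpr hc)
    -- support has at most 2 elements
    have hcard : S.card ≤ 2 := by
      by_contra hc
      push_neg at hc
      obtain ⟨T, hTS, hT3⟩ := Finset.exists_subset_card_eq (show 3 ≤ S.card by omega)
      obtain ⟨p, q, r, hpq, hpr, hqr, rfl⟩ := Finset.card_eq_three.mp hT3
      have hvp : 0 < v p := lt_of_le_of_ne (hpos p)
        (Ne.symm ((hmemS p).mp (hTS (by simp))))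
      have hvq : 0 < v q := lt_of_le_of_ne (hpos q)
        (Ne.symm ((hmemS q).mp (hTS (by simp))))
      have hvr : 0 < v r := lt_of_le_of_ne (hpos r)
        (Ne.symm ((hmemS r).mp (hTS (by simp))))
      obtain ⟨d, hdp, hdq, hdr, hdz⟩ :
          ∃ d : Fin (2 * m + 1) → ℝ, d p = (q.1 : ℝ) - r.1 ∧ d q = (r.1 : ℝ) - p.1 ∧
            d r = (p.1 : ℝ) - q.1 ∧ ∀ ℓ, ℓ ≠ p → ℓ ≠ q → ℓ ≠ r → d ℓ = 0 := by
        refine ⟨fun ℓ => if ℓ = p then (q.1 : ℝ) - r.1 else if ℓ = q then (r.1 : ℝ) - p.1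
          else if ℓ = r then (p.1 : ℝ) - q.1 else 0, by simp, by simp [hpq.symm], ?_, ?_⟩
        · simp [hpr.symm, hqr.symm]
        · intro ℓ h1 h2 h3; simp [h1, h2, h3]
      obtain ⟨ε, hε0, hεd⟩ : ∃ ε : ℝ, 0 < ε ∧ ∀ ℓ, ε * |d ℓ| ≤ v ℓ ∨ d ℓ = 0 := by
        have hMb : ∀ ℓ : Fin (2 * m + 1), |d ℓ| ≤ 2 * m + 1 := by
          intro ℓ
          have b1 : ∀ k : Fin (2 * m + 1), (k.1 : ℝ) ≤ 2 * m := by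
            intro k
            have hk : k.1 ≤ 2 * m := by omega
            exact_mod_cast hk
          have b2 : ∀ k : Fin (2 * m + 1), (0:ℝ) ≤ (k.1 : ℝ) := fun k => Nat.cast_nonneg _
          by_cases h1 : ℓ = p
          · subst h1; rw [hdp, abs_le]; constructor <;> nlinarith [b1 q, b1 r, b2 q, b2 r]
          · by_cases h2 : ℓ = q
            · subst h2; rw [hdq, abs_le]; constructor <;> nlinarith [b1 r, b1 p, b2 r, b2 p]
            · by_cases h3 : ℓ = r
              · subst h3; rw [hdr, abs_le]; constructor <;> nlinarith [b1 p, b1 q, b2 p, b2 q]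
              · rw [hdz ℓ h1 h2 h3]; simp; positivity
        have hM0 : (0:ℝ) < 2 * m + 1 := by positivity
        set δ : ℝ := min (v p) (min (v q) (v r)) with hδ
        have hδ0 : 0 < δ := lt_min hvp (lt_min hvq hvr)
        refine ⟨δ / (2 * m + 1), div_pos hδ0 hM0, ?_⟩
        intro ℓ
        by_cases h1 : ℓ = p
        · left
          subst h1
          have h := mul_le_mul_of_nonneg_left (hMb ℓ) (le_of_lt (div_pos hδ0 hM0))
          rw [div_mul_cancel₀ _ hM0.ne'] at h
          exact h.trans (min_le_left _ _)
        · by_cases h2 : ℓ = q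
          · left
            subst h2
            have h := mul_le_mul_of_nonneg_left (hMb ℓ) (le_of_lt (div_pos hδ0 hM0))
            rw [div_mul_cancel₀ _ hM0.ne'] at h
            exact h.trans (le_trans (min_le_right _ _) (min_le_left _ _))
          · by_cases h3 : ℓ = r
            · left
              subst h3
              have h := mul_le_mul_of_nonneg_left (hMb ℓ) (le_of_lt (div_pos hδ0 hM0))
              rw [div_mul_cancel₀ _ hM0.ne'] at h
              exact h.trans (le_trans (min_le_right _ _) (min_le_right _ _))
            · right; exact hdz ℓ h1 h2 h3
      have hnn1 : ∀ ℓ, 0 ≤ v ℓ + ε * d ℓ := by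
        intro ℓ
        rcases hεd ℓ with h | h
        · have h1 : -(ε * |d ℓ|) ≤ ε * d ℓ := by
            have := mul_le_mul_of_nonneg_left (neg_abs_le (d ℓ)) hε0.le
            rw [mul_neg] at this
            linarith
          linarith
        · rw [h]; simpa using hpos ℓ
      have hnn2 : ∀ ℓ, 0 ≤ v ℓ - ε * d ℓ := by
        intro ℓ
        rcases hεd ℓ with h | h
        · have h1 : ε * d ℓ ≤ ε * |d ℓ| :=
            mul_le_mul_of_nonneg_left (le_abs_self _) hε0.le
          linarith
        · rw [h]; simpa using hpos ℓ
      have hdsum : ∑ ℓ, d ℓ = 0 := by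
        have h := sum_triple_support' d (fun _ => 1) p q r hpq hpr hqr hdz
        simp only [one_mul] at h
        rw [h, hdp, hdq, hdr]; ring
      have hdwsum : ∑ ℓ : Fin (2 * m + 1), (ℓ.1 : ℝ) * d ℓ = 0 := by
        rw [sum_triple_support' d (fun ℓ => (ℓ.1 : ℝ)) p q r hpq hpr hqr hdz,
          hdp, hdq, hdr]; ring
      have hxP : (fun ℓ => v ℓ + ε * d ℓ) ∈ Pset m b := by
        refine ⟨hnn1, ?_, ?_⟩
        · rw [Finset.sum_add_distrib, ← Finset.mul_sum, hdsum, hsum]; ring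
        · have hsplit : ∀ ℓ : Fin (2 * m + 1), (ℓ.1 : ℝ) * (v ℓ + ε * d ℓ)
              = (ℓ.1 : ℝ) * v ℓ + ε * ((ℓ.1 : ℝ) * d ℓ) := fun ℓ => by ring
          rw [Finset.sum_congr rfl (fun ℓ _ => hsplit ℓ), Finset.sum_add_distrib,
            ← Finset.mul_sum, hdwsum, hwsum]
          ring
      have hyP : (fun ℓ => v ℓ - ε * d ℓ) ∈ Pset m b := by
        refine ⟨hnn2, ?_, ?_⟩
        · rw [Finset.sum_sub_distrib, ← Finset.mul_sum, hdsum, hsum]; ring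
        · have hsplit : ∀ ℓ : Fin (2 * m + 1), (ℓ.1 : ℝ) * (v ℓ - ε * d ℓ)
              = (ℓ.1 : ℝ) * v ℓ - ε * ((ℓ.1 : ℝ) * d ℓ) := fun ℓ => by ring
          rw [Finset.sum_congr rfl (fun ℓ _ => hsplit ℓ), Finset.sum_sub_distrib,
            ← Finset.mul_sum, hdwsum, hwsum]
          ring
      have hmid : v = (1/2 : ℝ) • (fun ℓ => v ℓ + ε * d ℓ)
          + (1 - (1/2 : ℝ)) • (fun ℓ => v ℓ - ε * d ℓ) := by
        funext ℓ
        simp only [Pi.add_apply, Pi.smul_apply, smul_eq_mul]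
        ring
      obtain ⟨hxv, -⟩ := hext (1/2) (by norm_num) (by norm_num) _ hxP _ hyP hmid
      have hcp := congrFun hxv p
      have hdp0 : d p ≠ 0 := by
        rw [hdp]
        intro hc0
        apply hqr
        apply Fin.ext
        have : (q.1 : ℝ) = r.1 := by linarith
        exact_mod_cast this
      have : ε * d p = 0 := by linarith
      rcases mul_eq_zero.mp this with h | h
      · exact absurd h hε0.ne'
      · exact hdp0 h
    -- support is nonempty
    have hne : S.Nonempty := by
      rw [Finset.nonempty_iff_ne_empty]
      intro hS0
      have : ∀ ℓ, v ℓ = 0 := fun ℓ => hoffS ℓ (by simp [hS0])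
      rw [Finset.sum_congr rfl (fun ℓ _ => this ℓ)] at hsum
      simp at hsum
      exact absurd hsum.symm hb.ne'
    have h1le : 1 ≤ S.card := Finset.card_pos.mpr hne
    interval_cases hSc : S.card
    · -- card = 1
      obtain ⟨i, hSi⟩ := Finset.card_eq_one.mp hSc
      have hs : ∀ ℓ, ℓ ≠ i → v ℓ = 0 := by
        intro ℓ h
        apply hoffS
        rw [hSi]; simpa using h
      have evi : v i = b := by
        have h := sum_single_support' v (fun _ => 1) i hs
        simp only [one_mul] at h
        rw [← h]; simpa using hsum
      have him : (i : ℕ) = m := by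
        have h := sum_single_support' v (fun ℓ => (ℓ.1 : ℝ)) i hs
        rw [hwsum, evi] at h
        have h2 : (m : ℝ) = (i.1 : ℝ) := mul_right_cancel₀ hb.ne' h
        exact_mod_cast h2.symm
      exact Or.inr (unique_one' m b i him v hvP hs)
    · -- card = 2
      obtain ⟨i, j, hij, hSij⟩ := Finset.card_eq_two.mp hSc
      have key : ∀ i j : Fin (2 * m + 1), (i : ℕ) < (j : ℕ) → S = {i, j} →
          (∃ i j : Fin (2 * m + 1), (i : ℕ) < m ∧ m < (j : ℕ) ∧
            v = fun ℓ =>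
              (if ℓ = i then ((j : ℝ) - m) / ((j : ℝ) - i) * b else 0) +
              (if ℓ = j then ((m : ℝ) - i) / ((j : ℝ) - i) * b else 0)) := by
        clear hij hSij i j
        intro i j hij hSij
        have hne' : i ≠ j := fun h => by subst h; exact lt_irrefl _ hij
        have hs : ∀ ℓ, ℓ ≠ i → ℓ ≠ j → v ℓ = 0 := by
          intro ℓ h1 h2
          apply hoffS
          rw [hSij]; simp [h1, h2]
        have hvi : 0 < v i := lt_of_le_of_ne (hpos i)
          (Ne.symm ((hmemS i).mp (by rw [hSij]; simp)))
        have hvj : 0 < v j := lt_of_le_of_ne (hpos j)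
          (Ne.symm ((hmemS j).mp (by rw [hSij]; simp)))
        have e1 : v i + v j = b := by
          have h := sum_pair_support' v (fun _ => 1) i j hne' hs
          simp only [one_mul] at h
          rw [← h]; simpa using hsum
        have e2 : (i : ℝ) * v i + (j : ℝ) * v j = m * b := by
          rw [← sum_pair_support' v (fun ℓ => (ℓ.1 : ℝ)) i j hne' hs]; exact hwsum
        have hijR : (i : ℝ) < (j : ℝ) := by exact_mod_cast hij
        have k1 : ((m:ℝ) - i) * b = ((j:ℝ) - i) * v j := by
          linear_combination (i:ℝ) * e1 - e2
        have k2 : ((j:ℝ) - m) * b = ((j:ℝ) - i) * v i := by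
          linear_combination e2 - (j:ℝ) * e1
        have hprod1 : 0 < ((j:ℝ) - i) * v j :=
          mul_pos (by linarith) hvj
        have hprod2 : 0 < ((j:ℝ) - i) * v i :=
          mul_pos (by linarith) hvi
        have himR : (i : ℝ) < m := by nlinarith [k1, hprod1, hb]
        have hmjR : (m : ℝ) < (j : ℝ) := by nlinarith [k2, hprod2, hb]
        have him : (i : ℕ) < m := by exact_mod_cast himR
        have hmj : m < (j : ℕ) := by exact_mod_cast hmjR
        exact ⟨i, j, him, hmj, unique_two m b i j him hmj v hvP hs⟩
      have hvij : (i : ℕ) ≠ (j : ℕ) := fun h => hij (Fin.ext h)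
      rcases lt_or_gt_of_ne hvij with h | h
      · exact Or.inl (key i j h hSij)
      · exact Or.inl (key j i h (by rw [hSij, Finset.pair_comm]))
  · -- reverse: description → vertex
    rintro (⟨i, j, hi, hj, rfl⟩ | rfl)
    · refine ⟨wij_mem m b hb i j hi hj, ?_⟩
      intro a ha0 ha1 x hx y hy heq
      have hzero : ∀ ℓ, ℓ ≠ i → ℓ ≠ j → x ℓ = 0 ∧ y ℓ = 0 := by
        intro ℓ h1 h2
        have hℓ := congrFun heq ℓ
        simp only [Pi.add_apply, Pi.smul_apply, smul_eq_mul, h1, h2, if_neg] at hℓ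
        norm_num at hℓ
        have hx0 := hx.1 ℓ
        have hy0 := hy.1 ℓ
        constructor <;> nlinarith [hℓ]
      have hxe := unique_two m b i j hi hj x hx (fun ℓ h1 h2 => (hzero ℓ h1 h2).1)
      have hye := unique_two m b i j hi hj y hy (fun ℓ h1 h2 => (hzero ℓ h1 h2).2)
      exact ⟨hxe, hye⟩
    · refine ⟨em_mem m b hb, ?_⟩
      intro a ha0 ha1 x hx y hy heq
      have hmlt : m < 2 * m + 1 := by omega
      set im : Fin (2 * m + 1) := ⟨m, hmlt⟩ with him
      have himv : (im : ℕ) = m := rfl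
      have hzero : ∀ ℓ, ℓ ≠ im → x ℓ = 0 ∧ y ℓ = 0 := by
        intro ℓ h1
        have hℓm : (ℓ : ℕ) ≠ m := fun h => h1 (Fin.ext h)
        have hℓ := congrFun heq ℓ
        simp only [Pi.add_apply, Pi.smul_apply, smul_eq_mul, hℓm, if_neg] at hℓ
        norm_num at hℓ
        have hx0 := hx.1 ℓ
        have hy0 := hy.1 ℓ
        constructor <;> nlinarith [hℓ]
      have hxe := unique_one' m b im himv x hx (fun ℓ h1 => (hzero ℓ h1).1)
      have hye := unique_one' m b im himv y hy (fun ℓ h1 => (hzero ℓ h1).2)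
      exact ⟨hxe, hye⟩
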